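/- A congruence R on G(E) is a non-Rees congruence if and only if there exists a vertex v ∈ E⁰ with (v, μ) ∈ R for some μ ∈ G(E) \ {v} but (v, 0) ∉ R. -/

import Mathlib

universe u

/-- A directed graph: vertices, edges, source and range maps. -/
structure DGraph : Type (u + 1) where
  V : Type u
  Ed : Type u
  src : Ed → V
  rng : Ed → V

/-- The end vertex of a list of edges started at `v` (ignoring composability). -/
def DGraph.ranAux (G : DGraph) : G.V → List G.Ed → G.V
  | v, [] => v
  | _, e :: es => DGraph.ranAux G (G.rng e) es

/-- The edges `l` form a composable path starting at `v`. -/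
def DGraph.Chain (G : DGraph) : G.V → List G.Ed → Prop
  | _, [] => True
  | v, e :: es => G.src e = v ∧ DGraph.Chain G (G.rng e) es

theorem DGraph.ranAux_append (G : DGraph) (v : G.V) (l1 l2 : List G.Ed) :
    G.ranAux v (l1 ++ l2) = G.ranAux (G.ranAux v l1) l2 := by
  induction l1 generalizing v with
  | nil => rfl
  | cons e es ih => exact ih (G.rng e)

theorem DGraph.chain_append (G : DGraph) {v : G.V} {l1 l2 : List G.Ed}
    (h1 : G.Chain v l1) (h2 : G.Chain (G.ranAux v l1) l2) : G.Chain v (l1 ++ l2) := by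
  induction l1 generalizing v with
  | nil => exact h2
  | cons e es ih => exact ⟨h1.1, ih h1.2 h2⟩

theorem DGraph.chain_append_right (G : DGraph) {v : G.V} {l1 l2 : List G.Ed}
    (h : G.Chain v (l1 ++ l2)) : G.Chain (G.ranAux v l1) l2 := by
  induction l1 generalizing v with
  | nil => exact h
  | cons e es ih => exact ih h.2

/-- A (finite, directed) path in the graph `G`: a start vertex together
with a composable list of edges. Vertices are the paths of length `0`. -/
structure GPath (G : DGraph.{u}) : Type u where
  start : G.V
  edges : List G.Ed
  chain : G.Chain start edges

namespace GPath

variable {G : DGraph}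

/-- The range (end vertex) of a path. -/
def ran (p : GPath G) : G.V := G.ranAux p.start p.edges

/-- The path of length zero at a vertex. -/
def ofVertex (G : DGraph) (v : G.V) : GPath G := ⟨v, [], trivial⟩

/-- The path of length one given by an edge. -/
def ofEdge (G : DGraph) (e : G.Ed) : GPath G := ⟨G.src e, [e], ⟨rfl, trivial⟩⟩

@[simp] theorem ofVertex_ran (G : DGraph) (v : G.V) : (ofVertex G v).ran = v := rfl

@[simp] theorem ofEdge_ran (G : DGraph) (e : G.Ed) : (ofEdge G e).ran = G.rng e := rfl

/-- Concatenation of composable paths. -/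
def append (p q : GPath G) (h : p.ran = q.start) : GPath G :=
  ⟨p.start, p.edges ++ q.edges,
    G.chain_append p.chain (by
      show G.Chain (G.ranAux p.start p.edges) q.edges
      have : G.ranAux p.start p.edges = q.start := h
      rw [this]; exact q.chain)⟩

@[simp] theorem append_ran (p q : GPath G) (h : p.ran = q.start) :
    (p.append q h).ran = q.ran := by
  show G.ranAux p.start (p.edges ++ q.edges) = q.ran
  rw [G.ranAux_append]
  have : G.ranAux p.start p.edges = q.start := h
  rw [this]; rfl

/-- `y` is an initial segment of the path `p`. -/
def IsPrefixOf (y p : GPath G) : Prop := y.start = p.start ∧ y.edges <+: p.edges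

/-- The remainder `t` of `p` after its initial segment `y`, so that `p = y ++ t`. -/
def remainder (y p : GPath G) (h : y.IsPrefixOf p) : GPath G :=
  ⟨y.ran, p.edges.drop y.edges.length, by
    obtain ⟨l2, hl⟩ := h.2
    rw [← hl, List.drop_left]
    show G.Chain (G.ranAux y.start y.edges) l2
    rw [h.1]
    exact G.chain_append_right (v := p.start) (l1 := y.edges) (l2 := l2)
      (by rw [hl]; exact p.chain)⟩

@[simp] theorem remainder_ran (y p : GPath G) (h : y.IsPrefixOf p) :
    (y.remainder p h).ran = p.ran := by
  obtain ⟨l2, hl⟩ := h.2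
  show G.ranAux y.ran (p.edges.drop y.edges.length) = p.ran
  rw [← hl, List.drop_left]
  show G.ranAux (G.ranAux y.start y.edges) l2 = p.ran
  rw [h.1, ← G.ranAux_append, hl]
  rfl

end GPath

/-- The graph inverse semigroup of `G` (in normal form): its elements are zero together
with the elements `x * y⁻¹` for paths `x`, `y` with the same range. -/
inductive GIS (G : DGraph.{u}) : Type u where
  | zero : GIS G
  | mk (x y : GPath G) (h : x.ran = y.ran) : GIS G

instance (G : DGraph) : Zero (GIS G) := ⟨GIS.zero⟩

open scoped Classical in
/-- Multiplication in the graph inverse semigroup. -/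
noncomputable def GIS.gmul {G : DGraph} : GIS G → GIS G → GIS G
  | GIS.zero, _ => GIS.zero
  | GIS.mk _ _ _, GIS.zero => GIS.zero
  | GIS.mk x y hxy, GIS.mk p q hpq =>
    if h1 : y.IsPrefixOf p then
      GIS.mk (x.append (y.remainder p h1) hxy) q
        (by exact (GPath.append_ran _ _ _).trans ((GPath.remainder_ran _ _ _).trans hpq))
    else if h2 : p.IsPrefixOf y then
      GIS.mk x (q.append (p.remainder y h2) hpq.symm)
        (by exact hxy.trans ((GPath.append_ran _ _ _).trans (GPath.remainder_ran _ _ _)).symm)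
    else GIS.zero

noncomputable instance (G : DGraph) : Mul (GIS G) := ⟨GIS.gmul⟩

/-- The element of `GIS G` corresponding to a vertex `v` (i.e. `v = v * v⁻¹`). -/
def vertexEl (G : DGraph) (v : G.V) : GIS G :=
  GIS.mk (GPath.ofVertex G v) (GPath.ofVertex G v) rfl

/-- The element of `GIS G` corresponding to an edge `e` (i.e. `e = e * r(e)⁻¹`). -/
def edgeEl (G : DGraph) (e : G.Ed) : GIS G :=
  GIS.mk (GPath.ofEdge G e) (GPath.ofVertex G (G.rng e)) rfl

/-- The inverse operation on `GIS G`: `(x y⁻¹)⁻¹ = y x⁻¹`. -/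
def GIS.inv {G : DGraph} : GIS G → GIS G
  | GIS.zero => GIS.zero
  | GIS.mk x y h => GIS.mk y x h.symm

/-- `a` lies in the principal left ideal generated by `b` (`S¹a ⊆ S¹b`). -/
def GreenLeL {G : DGraph} (a b : GIS G) : Prop := a = b ∨ ∃ c, a = c * b

/-- `a` lies in the principal right ideal generated by `b` (`aS¹ ⊆ bS¹`). -/
def GreenLeR {G : DGraph} (a b : GIS G) : Prop := a = b ∨ ∃ c, a = b * c

/-- `a` lies in the principal two-sided ideal generated by `b` (`S¹aS¹ ⊆ S¹bS¹`). -/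
def GreenLeJ {G : DGraph} (a b : GIS G) : Prop :=
  a = b ∨ (∃ c, a = c * b) ∨ (∃ c, a = b * c) ∨ (∃ c d, a = c * b * d)

/-- Green's `L`-relation. -/
def GreenEqL {G : DGraph} (a b : GIS G) : Prop := GreenLeL a b ∧ GreenLeL b a

/-- Green's `R`-relation. -/
def GreenEqR {G : DGraph} (a b : GIS G) : Prop := GreenLeR a b ∧ GreenLeR b a

/-- Green's `J`-relation. -/
def GreenEqJ {G : DGraph} (a b : GIS G) : Prop := GreenLeJ a b ∧ GreenLeJ b a

/-- There is a (possibly trivial) directed path from `v` to `w` in `G`. -/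
def GConnected (G : DGraph) (v w : G.V) : Prop := ∃ t : GPath G, t.start = v ∧ t.ran = w

/-- `I` is a (two-sided) ideal of `GIS G`. -/
def GISIdeal {G : DGraph} (I : Set (GIS G)) : Prop :=
  ∀ a ∈ I, ∀ c : GIS G, a * c ∈ I ∧ c * a ∈ I

/-- `R` is the Rees congruence of some ideal `I`, i.e. `R = (I × I) ∪ Δ`. -/
def IsReesCon {G : DGraph} (R : Con (GIS G)) : Prop :=
  ∃ I : Set (GIS G), GISIdeal I ∧ ∀ a b : GIS G, R a b ↔ (a ∈ I ∧ b ∈ I) ∨ a = b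

/-- The only congruences on `GIS G` are the universal one and the diagonal. -/
def CongFree (G : DGraph) : Prop :=
  ∀ R : Con (GIS G), (∀ a b : GIS G, R a b) ∨ (∀ a b : GIS G, R a b ↔ a = b)

/-- The natural partial order on the inverse semigroup `GIS G`:
`a ≤ b` iff `a = ε * b` for some idempotent `ε`. -/
def natLe {G : DGraph} (a b : GIS G) : Prop := ∃ ε : GIS G, ε * ε = ε ∧ a = ε * b

/-- The graph obtained from `G` by deleting the vertices in `S` and all
edges incident to them. -/
def DGraph.delete (G : DGraph) (S : Set G.V) : DGraph where
  V := {v : G.V // v ∉ S}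
  Ed := {e : G.Ed // G.src e ∉ S ∧ G.rng e ∉ S}
  src e := ⟨G.src e.1, e.2.1⟩
  rng e := ⟨G.rng e.1, e.2.2⟩

/-- The graph with a single vertex and `n` loops; its graph inverse semigroup
is the polycyclic monoid `Pₙ`. -/
def polyGraph (n : ℕ) : DGraph :=
  ⟨PUnit, Fin n, fun _ => PUnit.unit, fun _ => PUnit.unit⟩

section Helpers

variable {G : DGraph}

theorem GPath.ext' {p q : GPath G} (h1 : p.start = q.start) (h2 : p.edges = q.edges) :
    p = q := by
  cases p; cases q
  cases h1; cases h2
  rfl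

@[simp] theorem GPath.append_edges (p q : GPath G) (h : p.ran = q.start) :
    (p.append q h).edges = p.edges ++ q.edges := rfl

@[simp] theorem GPath.append_start (p q : GPath G) (h : p.ran = q.start) :
    (p.append q h).start = p.start := rfl

@[simp] theorem GPath.remainder_edges (y p : GPath G) (h : y.IsPrefixOf p) :
    (y.remainder p h).edges = p.edges.drop y.edges.length := rfl

@[simp] theorem GPath.remainder_start (y p : GPath G) (h : y.IsPrefixOf p) :
    (y.remainder p h).start = y.ran := rfl

@[simp] theorem GPath.ofVertex_edges (v : G.V) : (GPath.ofVertex G v).edges = [] := rfl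

@[simp] theorem GPath.ofVertex_start (v : G.V) : (GPath.ofVertex G v).start = v := rfl

theorem GPath.isPrefixOf_refl (p : GPath G) : p.IsPrefixOf p :=
  ⟨rfl, List.prefix_refl _⟩

theorem GPath.eq_of_prefix_of_drop_nil {p x : GPath G} (hpx : p.IsPrefixOf x)
    (h : x.edges.drop p.edges.length = []) : p = x := by
  obtain ⟨l, hl⟩ := hpx.2
  rw [← hl, List.drop_left] at h
  exact GPath.ext' hpx.1 (by rw [← hl, h, List.append_nil])

theorem GIS.mk_eq_mk {x y x' y' : GPath G} {h : x.ran = y.ran} {h' : x'.ran = y'.ran}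
    (hx : x = x') (hy : y = y') : GIS.mk x y h = GIS.mk x' y' h' := by
  subst hx; subst hy; rfl

theorem GIS.mk_inj {x y x' y' : GPath G} {h : x.ran = y.ran} {h' : x'.ran = y'.ran}
    (he : GIS.mk x y h = GIS.mk x' y' h') : x = x' ∧ y = y' := by
  injection he with h1 h2
  exact ⟨h1, h2⟩

theorem GIS.zero_mul (a : GIS G) : (0 : GIS G) * a = 0 := rfl

theorem GIS.mul_zero (a : GIS G) : a * (0 : GIS G) = 0 := by
  cases a <;> rfl

theorem GIS.mul_mk₁ {x y p q : GPath G} {hxy : x.ran = y.ran} {hpq : p.ran = q.ran}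
    (h1 : y.IsPrefixOf p) :
    GIS.mk x y hxy * GIS.mk p q hpq =
      GIS.mk (x.append (y.remainder p h1) hxy) q
        (by exact (GPath.append_ran _ _ _).trans ((GPath.remainder_ran _ _ _).trans hpq)) := by
  show GIS.gmul _ _ = _
  simp only [GIS.gmul]
  rw [dif_pos h1]

theorem GIS.mul_mk₂ {x y p q : GPath G} {hxy : x.ran = y.ran} {hpq : p.ran = q.ran}
    (h1 : ¬ y.IsPrefixOf p) (h2 : p.IsPrefixOf y) :
    GIS.mk x y hxy * GIS.mk p q hpq =
      GIS.mk x (q.append (p.remainder y h2) hpq.symm)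
        (by exact hxy.trans ((GPath.append_ran _ _ _).trans (GPath.remainder_ran _ _ _)).symm) := by
  show GIS.gmul _ _ = _
  simp only [GIS.gmul]
  rw [dif_neg h1, dif_pos h2]

theorem GIS.mul_mk₀ {x y p q : GPath G} {hxy : x.ran = y.ran} {hpq : p.ran = q.ran}
    (h1 : ¬ y.IsPrefixOf p) (h2 : ¬ p.IsPrefixOf y) :
    GIS.mk x y hxy * GIS.mk p q hpq = 0 := by
  show GIS.gmul _ _ = _
  simp only [GIS.gmul]
  rw [dif_neg h1, dif_neg h2]
  rfl

theorem conj_vertex (p q : GPath G) (hpq : p.ran = q.ran) :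
    GIS.mk (GPath.ofVertex G p.ran) p rfl * GIS.mk p q hpq *
      GIS.mk q (GPath.ofVertex G q.ran) rfl = vertexEl G q.ran := by
  erw [GIS.mul_mk₁ (GPath.isPrefixOf_refl p), GIS.mul_mk₁ (GPath.isPrefixOf_refl q)]
  exact GIS.mk_eq_mk (GPath.ext' (by simp; exact hpq) (by show ([] ++ p.edges.drop p.edges.length) ++ q.edges.drop q.edges.length = []; simp [List.drop_length])) rfl

theorem sandwich_vertex (x y : GPath G) (hxy : x.ran = y.ran) :
    GIS.mk x (GPath.ofVertex G x.ran) rfl * vertexEl G y.ran *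
      GIS.mk (GPath.ofVertex G y.ran) y rfl = GIS.mk x y hxy := by
  unfold vertexEl
  erw [GIS.mul_mk₁ (show (GPath.ofVertex G x.ran).IsPrefixOf (GPath.ofVertex G y.ran) from
        ⟨hxy, List.prefix_refl _⟩),
      GIS.mul_mk₁ (GPath.isPrefixOf_refl (GPath.ofVertex G y.ran))]
  exact GIS.mk_eq_mk (GPath.ext' rfl (by show (x.edges ++ ([] : List G.Ed).drop 0) ++ ([] : List G.Ed).drop 0 = x.edges; simp)) rfl

theorem prop_zero (R : Con (GIS G)) (x y : GPath G) (hxy : x.ran = y.ran)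
    (hv : R (vertexEl G y.ran) 0) : R (GIS.mk x y hxy) 0 := by
  have h2 := R.mul (R.mul (R.refl (GIS.mk x (GPath.ofVertex G x.ran) rfl)) hv)
    (R.refl (GIS.mk (GPath.ofVertex G y.ran) y rfl))
  rwa [sandwich_vertex x y hxy, GIS.mul_zero, GIS.zero_mul] at h2

theorem struct_case (R : Con (GIS G))
    (H : ∀ v : G.V, (∃ mu : GIS G, mu ≠ vertexEl G v ∧ R (vertexEl G v) mu) →
      R (vertexEl G v) 0)
    {x y p q : GPath G} {hxy : x.ran = y.ran} {hpq : p.ran = q.ran}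
    (hab : R (GIS.mk x y hxy) (GIS.mk p q hpq))
    (hpx : p.IsPrefixOf x)
    (hy_start : y.start = q.start)
    (hy_edges : y.edges = q.edges ++ x.edges.drop p.edges.length)
    (ht : x.edges.drop p.edges.length ≠ []) :
    R (GIS.mk x y hxy) 0 ∧ R (GIS.mk p q hpq) 0 := by
  have hq_pre : q.IsPrefixOf y := ⟨hy_start.symm, ⟨_, hy_edges.symm⟩⟩
  have hny : ¬ y.IsPrefixOf q := by
    intro h
    have hle := h.2.length_le
    rw [hy_edges, List.length_append] at hle
    have hlen : (x.edges.drop p.edges.length).length = 0 := by omega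
    exact ht (List.eq_nil_of_length_eq_zero hlen)
  have hR := R.mul (R.mul (R.refl (GIS.mk (GPath.ofVertex G p.ran) p rfl)) (R.symm hab))
    (R.refl (GIS.mk q (GPath.ofVertex G q.ran) rfl))
  erw [conj_vertex p q hpq, GIS.mul_mk₁ hpx, GIS.mul_mk₂ hny hq_pre] at hR
  have hv0 : R (vertexEl G q.ran) 0 := by
    refine H q.ran ⟨_, ?_, hR⟩
    intro h
    obtain ⟨h1, -⟩ := GIS.mk_inj h
    have h1e := congrArg GPath.edges h1
    simp only [GPath.append_edges, GPath.remainder_edges, GPath.ofVertex_edges, List.nil_append, List.append_eq_nil_iff] at h1e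
    exact ht h1e
  have hb0 := prop_zero R p q hpq hv0
  exact ⟨R.trans hab hb0, hb0⟩

theorem key_lemma (R : Con (GIS G))
    (H : ∀ v : G.V, (∃ mu : GIS G, mu ≠ vertexEl G v ∧ R (vertexEl G v) mu) →
      R (vertexEl G v) 0)
    {a b : GIS G} (hab : R a b) (hne : a ≠ b) : R a 0 ∧ R b 0 := by
  cases a with
  | zero => exact ⟨R.refl 0, R.symm hab⟩
  | mk x y hxy =>
    cases b with
    | zero => exact ⟨hab, R.refl 0⟩
    | mk p q hpq =>
      have key := R.mul (R.mul (R.refl (GIS.mk (GPath.ofVertex G x.ran) x rfl)) hab)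
        (R.refl (GIS.mk y (GPath.ofVertex G y.ran) rfl))
      rw [conj_vertex x y hxy] at key
      by_cases hm : (GIS.mk (GPath.ofVertex G x.ran) x rfl * GIS.mk p q hpq *
          GIS.mk y (GPath.ofVertex G y.ran) rfl) = vertexEl G y.ran
      · -- structural analysis
        by_cases hxp : x.IsPrefixOf p
        · erw [GIS.mul_mk₁ hxp] at hm
          by_cases hqy : q.IsPrefixOf y
          · erw [GIS.mul_mk₁ hqy] at hm
            obtain ⟨h1, -⟩ := GIS.mk_inj hm
            have h1e : ([] ++ p.edges.drop x.edges.length) ++ y.edges.drop q.edges.length = [] := congrArg GPath.edges h1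
            simp only [GPath.append_edges, GPath.remainder_edges, GPath.ofVertex_edges, List.nil_append, List.append_eq_nil_iff] at h1e
            exact absurd (GIS.mk_eq_mk (GPath.eq_of_prefix_of_drop_nil hxp h1e.1)
              (GPath.eq_of_prefix_of_drop_nil hqy h1e.2).symm) hne
          · by_cases hyq : y.IsPrefixOf q
            · erw [GIS.mul_mk₂ hqy hyq] at hm
              obtain ⟨h1, h2⟩ := GIS.mk_inj hm
              have h1e := congrArg GPath.edges h1
              have h2e := congrArg GPath.edges h2
              simp only [GPath.append_edges, GPath.remainder_edges, GPath.ofVertex_edges, List.nil_append, List.append_eq_nil_iff] at h1e h2e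
              exact absurd (GIS.mk_eq_mk (GPath.eq_of_prefix_of_drop_nil hxp h1e)
                (GPath.eq_of_prefix_of_drop_nil hyq h2e)) hne
            · erw [GIS.mul_mk₀ hqy hyq] at hm
              cases hm
        · by_cases hpx : p.IsPrefixOf x
          · erw [GIS.mul_mk₂ hxp hpx] at hm
            have hyS : y = q.append (p.remainder x hpx) hpq.symm := by
              by_cases hsy : (q.append (p.remainder x hpx) hpq.symm).IsPrefixOf y
              · erw [GIS.mul_mk₁ hsy] at hm
                obtain ⟨h1, -⟩ := GIS.mk_inj hm
                have h1e := congrArg GPath.edges h1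
                simp only [GPath.append_edges, GPath.remainder_edges, GPath.ofVertex_edges, List.nil_append, List.append_eq_nil_iff] at h1e
                exact (GPath.eq_of_prefix_of_drop_nil hsy h1e).symm
              · by_cases hys : y.IsPrefixOf (q.append (p.remainder x hpx) hpq.symm)
                · erw [GIS.mul_mk₂ hsy hys] at hm
                  obtain ⟨-, h2⟩ := GIS.mk_inj hm
                  have h2e := congrArg GPath.edges h2
                  simp only [GPath.append_edges, GPath.remainder_edges, GPath.ofVertex_edges, List.nil_append, List.append_eq_nil_iff] at h2e
                  exact GPath.eq_of_prefix_of_drop_nil hys h2e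
                · erw [GIS.mul_mk₀ hsy hys] at hm
                  cases hm
            have hy_start : y.start = q.start := by rw [hyS]; rfl
            have hy_edges : y.edges = q.edges ++ x.edges.drop p.edges.length := by
              rw [hyS]; rfl
            by_cases ht : x.edges.drop p.edges.length = []
            · have hxp' : p = x := GPath.eq_of_prefix_of_drop_nil hpx ht
              have hyq' : y = q := GPath.ext' hy_start (by rw [hy_edges, ht, List.append_nil])
              exact absurd (GIS.mk_eq_mk hxp'.symm hyq') hne
            · exact struct_case R H hab hpx hy_start hy_edges ht
          · erw [GIS.mul_mk₀ hxp hpx] at hm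
            cases hm
      · have hv0 := H y.ran ⟨_, hm, key⟩
        have ha0 := prop_zero R x y hxy hv0
        exact ⟨ha0, R.trans (R.symm hab) ha0⟩

end Helpers

/-- A congruence `R` on `G(E)` is a non-Rees congruence iff there is a
vertex `v` with `(v, μ) ∈ R` for some `μ ≠ v` but `(v, 0) ∉ R`. -/
theorem stmt11 (G : DGraph) (R : Con (GIS G)) :
    ¬ IsReesCon R ↔
      ∃ v : G.V, (∃ mu : GIS G, mu ≠ vertexEl G v ∧ R (vertexEl G v) mu) ∧
        ¬ R (vertexEl G v) 0 := by
  constructor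
  · intro hnotRees
    by_contra hno
    push_neg at hno
    apply hnotRees
    refine ⟨{c | R c 0}, ?_, ?_⟩
    · intro a ha c
      constructor
      · have h := R.mul ha (R.refl c)
        rwa [GIS.zero_mul] at h
      · have h := R.mul (R.refl c) ha
        rwa [GIS.mul_zero] at h
    · intro a b
      constructor
      · intro hab
        by_cases h : a = b
        · exact Or.inr h
        · exact Or.inl (key_lemma R hno hab h)
      · rintro (⟨ha, hb⟩ | rfl)
        · exact R.trans ha (R.symm hb)
        · exact R.refl a
  · rintro ⟨v, ⟨mu, hmu_ne, hRv⟩, hn0⟩ ⟨I, hI, hIff⟩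
    have hvI : vertexEl G v ∈ I := by
      rcases (hIff _ _).1 hRv with ⟨h1, -⟩ | h
      · exact h1
      · exact absurd h.symm hmu_ne
    have h0I : (0 : GIS G) ∈ I := by
      have h := (hI _ hvI 0).1
      rwa [GIS.mul_zero] at h
    exact hn0 ((hIff _ _).2 (Or.inl ⟨hvI, h0I⟩))
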